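/- Let ℝ_p[X⁰,…,Xⁿ] be the space of homogeneous polynomials of degree p in n+1 variables and let □ = −∂₀² + Σᵢ∂ᵢ² be the wave operator. Then ℝ_p[X⁰,…,Xⁿ] = ℋ_p ⊕ (−(X⁰)² + Σᵢ(Xⁱ)²)·ℝ_{p−2}[X⁰,…,Xⁿ], where ℋ_p = ker(□) ∩ ℝ_p[X⁰,…,Xⁿ] is the space of wave-harmonic homogeneous polynomials of degree p. -/

import Mathlib

/-!
Statement 5: the space of homogeneous polynomials of degree p in X⁰,…,Xⁿ decomposes as
ℝ_p = ℋ_p ⊕ (−(X⁰)² + Σᵢ(Xⁱ)²)·ℝ_{p−2}, with ℋ_p the wave-harmonic homogeneous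
polynomials of degree p.  This is stated as existence and uniqueness of the
decomposition.
-/

set_option linter.unusedSectionVars false
noncomputable section

open MvPolynomial

section Aux

variable {σ : Type*} [Fintype σ] [DecidableEq σ]

lemma degree_eq_sum (s : σ →₀ ℕ) : s.degree = ∑ j : σ, s j :=
  Finset.sum_subset (Finset.subset_univ _)
    (fun _ _ hx => Finsupp.notMem_support_iff.mp hx)

lemma homog_degree {P : MvPolynomial σ ℝ} {d : ℕ} (h : P.IsHomogeneous d)
    {s : σ →₀ ℕ} (hs : coeff s P ≠ 0) : s.degree = d := by
  rw [Finsupp.degree_eq_weight_one]; exact h hs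

lemma degree_sub_single {s : σ →₀ ℕ} {i : σ} (h : s i ≠ 0) :
    (s - Finsupp.single i 1).degree = s.degree - 1 := by
  have hle : Finsupp.single i 1 ≤ s := by rw [Finsupp.single_le_iff]; omega
  have h1 : (s - Finsupp.single i 1) + Finsupp.single i 1 = s := tsub_add_cancel_of_le hle
  have h2 : ∀ t u : σ →₀ ℕ, (t + u).degree = t.degree + u.degree := by
    intro t u
    simp [degree_eq_sum, Finsupp.add_apply, Finset.sum_add_distrib]
  have h4 : (Finsupp.single i 1 : σ →₀ ℕ).degree = 1 := by
    simp [degree_eq_sum, Finsupp.single_apply]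
  have h3 : 1 ≤ s.degree := le_trans (by omega) (Finsupp.le_degree i s)
  have := h2 (s - Finsupp.single i 1) (Finsupp.single i 1)
  rw [h1, h4] at this
  omega

lemma pderiv_monomial_homog {i : σ} {s : σ →₀ ℕ} {a : ℝ} {d : ℕ} (h : s.degree = d) :
    (pderiv i (monomial s a) : MvPolynomial σ ℝ).IsHomogeneous (d - 1) := by
  rw [pderiv_monomial]
  by_cases hi : s i = 0
  · simp only [hi, Nat.cast_zero, mul_zero, monomial_zero]
    exact isHomogeneous_zero _ _ _
  · exact isHomogeneous_monomial _ (by rw [degree_sub_single hi, h])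

lemma pderiv_homog {P : MvPolynomial σ ℝ} {d : ℕ} (h : P.IsHomogeneous d) (i : σ) :
    (pderiv i P).IsHomogeneous (d - 1) := by
  conv_lhs => rw [P.as_sum]
  rw [map_sum]
  exact MvPolynomial.IsHomogeneous.sum _ _ _ (fun s hs =>
    pderiv_monomial_homog (homog_degree h (MvPolynomial.mem_support_iff.mp hs)))

lemma pderiv_homog_zero {P : MvPolynomial σ ℝ} (h : P.IsHomogeneous 0) (i : σ) :
    pderiv i P = 0 := by
  conv_lhs => rw [P.as_sum]
  rw [map_sum]
  refine Finset.sum_eq_zero (fun s hs => ?_)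
  have : s = 0 := (Finsupp.degree_eq_zero_iff s).mp
    (homog_degree h (MvPolynomial.mem_support_iff.mp hs))
  rw [this, monomial_zero', pderiv_C]

lemma euler {P : MvPolynomial σ ℝ} {d : ℕ} (h : P.IsHomogeneous d) :
    ∑ j : σ, X j * pderiv j P = d • P := by
  conv_lhs => rw [P.as_sum]
  conv_rhs => rw [P.as_sum]
  rw [Finset.smul_sum]
  simp_rw [map_sum, Finset.mul_sum]
  rw [Finset.sum_comm]
  refine Finset.sum_congr rfl (fun s hs => ?_)
  have hdeg : s.degree = d := homog_degree h (MvPolynomial.mem_support_iff.mp hs)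
  have key : ∀ j : σ, X j * pderiv j (monomial s (coeff s P)) = (s j) • monomial s (coeff s P) := by
    intro j
    rw [pderiv_monomial]
    by_cases hj : s j = 0
    · simp [hj]
    · rw [X, monomial_mul, one_mul,
        show Finsupp.single j 1 + (s - Finsupp.single j 1) = s by
          rw [add_comm]; exact tsub_add_cancel_of_le (by rw [Finsupp.single_le_iff]; omega)]
      rw [smul_monomial, nsmul_eq_mul, mul_comm]
  simp_rw [key]
  rw [← Finset.sum_smul, ← degree_eq_sum, hdeg]

end Aux

/-- The wave operator `□P = −∂₀²P + Σᵢ ∂ᵢ²P` on polynomials in `X⁰,…,Xⁿ`. -/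
def waveOpP (n : ℕ) (P : MvPolynomial (Fin (n+1)) ℝ) : MvPolynomial (Fin (n+1)) ℝ :=
  -(pderiv 0 (pderiv 0 P)) + ∑ i : Fin n, pderiv i.succ (pderiv i.succ P)

/-- The Minkowski quadratic polynomial `−(X⁰)² + Σᵢ (Xⁱ)²`. -/
def minkP (n : ℕ) : MvPolynomial (Fin (n+1)) ℝ :=
  -(X 0) ^ 2 + ∑ i : Fin n, (X i.succ) ^ 2

variable {n : ℕ}

lemma wave_add (A B : MvPolynomial (Fin (n+1)) ℝ) :
    waveOpP n (A + B) = waveOpP n A + waveOpP n B := by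
  simp only [waveOpP, map_add, Finset.sum_add_distrib]
  ring

lemma wave_smul (a : ℝ) (A : MvPolynomial (Fin (n+1)) ℝ) :
    waveOpP n (a • A) = a • waveOpP n A := by
  simp only [waveOpP, Derivation.map_smul, smul_add, Finset.smul_sum, smul_neg]

lemma wave_zero : waveOpP n 0 = 0 := by
  simp [waveOpP]

lemma wave_sub (A B : MvPolynomial (Fin (n+1)) ℝ) :
    waveOpP n (A - B) = waveOpP n A - waveOpP n B := by
  simp only [waveOpP, map_sub, Finset.sum_sub_distrib]
  ring

lemma wave_neg (A : MvPolynomial (Fin (n+1)) ℝ) : waveOpP n (-A) = -waveOpP n A := by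
  simp only [waveOpP, map_neg, Finset.sum_neg_distrib]
  ring

lemma mink_homog : (minkP n).IsHomogeneous 2 := by
  refine MvPolynomial.IsHomogeneous.add ?_ ?_
  · exact ((isHomogeneous_X _ _).pow 2).neg
  · exact MvPolynomial.IsHomogeneous.sum _ _ _
      (fun i _ => (isHomogeneous_X _ _).pow 2)

lemma pderiv_mink_zero : pderiv 0 (minkP n) = -(2 * X 0) := by
  simp only [minkP, map_add, map_neg, pderiv_pow, pderiv_X_self, map_sum]
  rw [Finset.sum_eq_zero (fun i _ => by
    rw [pderiv_X_of_ne (Fin.succ_ne_zero i)]; ring)]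
  ring

lemma pderiv_mink_succ (i : Fin n) : pderiv i.succ (minkP n) = 2 * X i.succ := by
  simp only [minkP, map_add, map_neg, pderiv_pow, map_sum]
  rw [pderiv_X_of_ne (Fin.succ_ne_zero i).symm]
  rw [Finset.sum_eq_single i (fun j _ hj => by
      rw [pderiv_X_of_ne (fun h => hj (Fin.succ_injective n h))]; ring)
    (by simp)]
  rw [pderiv_X_self]
  ring

lemma pderiv2_mul (i : Fin (n+1)) (f g : MvPolynomial (Fin (n+1)) ℝ) :
    pderiv i (pderiv i (f * g)) =
      pderiv i (pderiv i f) * g + 2 * (pderiv i f * pderiv i g) + f * pderiv i (pderiv i g) := by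
  simp only [pderiv_mul, map_add]
  ring

lemma wave_homog {Q : MvPolynomial (Fin (n+1)) ℝ} {e : ℕ} (h : Q.IsHomogeneous (e+2)) :
    (waveOpP n Q).IsHomogeneous e := by
  have h2 : ∀ i : Fin (n+1), (pderiv i (pderiv i Q)).IsHomogeneous e := by
    intro i
    have := pderiv_homog (pderiv_homog h i) i
    simpa using this
  exact ((h2 0).neg).add (MvPolynomial.IsHomogeneous.sum _ _ _ (fun i _ => h2 i.succ))

lemma wave_low {Q : MvPolynomial (Fin (n+1)) ℝ} {d : ℕ} (h : Q.IsHomogeneous d)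
    (hd : d ≤ 1) : waveOpP n Q = 0 := by
  have h2 : ∀ i : Fin (n+1), pderiv i (pderiv i Q) = 0 := by
    intro i
    have h1 : (pderiv i Q).IsHomogeneous 0 := by
      have := pderiv_homog h i
      interval_cases d <;> simpa using this
    exact pderiv_homog_zero h1 i
  simp [waveOpP, h2]

lemma keyId {Q : MvPolynomial (Fin (n+1)) ℝ} {d : ℕ} (h : Q.IsHomogeneous d) :
    waveOpP n (minkP n * Q) =
      minkP n * waveOpP n Q + C (4*(d:ℝ) + 2*(n+1)) * Q := by
  have e1 : pderiv (0 : Fin (n+1)) (minkP n) = C (-2) * X 0 := by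
    rw [pderiv_mink_zero]; rw [map_neg, map_ofNat]; ring
  have e2 : ∀ i : Fin n, pderiv i.succ (minkP n) = C 2 * X i.succ := by
    intro i; rw [pderiv_mink_succ, map_ofNat]
  have heuler : X 0 * pderiv 0 Q + ∑ i : Fin n, X i.succ * pderiv i.succ Q
      = (d : MvPolynomial (Fin (n+1)) ℝ) * Q := by
    have := euler h
    rw [Fin.sum_univ_succ] at this
    rw [this, nsmul_eq_mul]
  have hC : (C (4*(d:ℝ) + 2*(n+1)) : MvPolynomial (Fin (n+1)) ℝ)
      = 4 * (d : MvPolynomial (Fin (n+1)) ℝ)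
        + 2 * ((n : MvPolynomial (Fin (n+1)) ℝ) + 1) := by
    rw [map_add, map_mul, map_mul, map_add, map_ofNat, map_ofNat, map_one,
      C_eq_coe_nat, C_eq_coe_nat]
  simp only [waveOpP, pderiv2_mul, e1, e2, pderiv_C_mul, pderiv_X_self, mul_one]
  simp only [map_neg, map_ofNat]
  rw [Finset.sum_add_distrib, Finset.sum_add_distrib, Finset.sum_const, Finset.card_univ,
    Fintype.card_fin, nsmul_eq_mul, hC, mul_add, mul_neg, Finset.mul_sum]
  have hmid : ∑ i : Fin n, 2 * (2 * X i.succ * pderiv i.succ Q)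
      = 4 * ∑ i : Fin n, X i.succ * pderiv i.succ Q := by
    rw [Finset.mul_sum]
    exact Finset.sum_congr rfl (fun i _ => by ring)
  rw [hmid]
  linear_combination (4 : MvPolynomial (Fin (n+1)) ℝ) * heuler

lemma keyId' {Q : MvPolynomial (Fin (n+1)) ℝ} {d : ℕ} (h : Q.IsHomogeneous d) :
    waveOpP n (minkP n * Q) =
      minkP n * waveOpP n Q + (4*(d:ℝ) + 2*(n+1)) • Q := by
  rw [keyId h, smul_eq_C_mul]

lemma smul_homog {Q : MvPolynomial (Fin (n+1)) ℝ} {d : ℕ} (h : Q.IsHomogeneous d) (a : ℝ) :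
    (a • Q).IsHomogeneous d := by
  rw [smul_eq_C_mul]; exact h.C_mul a

lemma real_smul_eq_zero {Q : MvPolynomial (Fin (n+1)) ℝ} {γ : ℝ} (hγ : γ ≠ 0)
    (h : γ • Q = 0) : Q = 0 := by
  have h2 := congrArg (fun A : MvPolynomial (Fin (n+1)) ℝ => γ⁻¹ • A) h
  simpa [inv_smul_smul₀ hγ] using h2

lemma wave_inj : ∀ d : ℕ, ∀ Q : MvPolynomial (Fin (n+1)) ℝ, Q.IsHomogeneous d →
    ∀ γ : ℝ, 0 < γ → minkP n * waveOpP n Q = -(γ • Q) → Q = 0 := by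
  intro d
  induction d using Nat.strong_induction_on with
  | _ d IH =>
    intro Q hQ γ hγ heq
    by_cases hd : d ≤ 1
    · rw [wave_low hQ hd, mul_zero] at heq
      have h0 : γ • Q = 0 := by rw [← neg_eq_zero, ← heq]
      exact real_smul_eq_zero (ne_of_gt hγ) h0
    · obtain ⟨e, rfl⟩ : ∃ e, d = e + 2 := ⟨d - 2, by omega⟩
      have hWQ : (waveOpP n Q).IsHomogeneous e := wave_homog hQ
      have h2 := congrArg (waveOpP n) heq
      rw [keyId' hWQ, wave_neg, wave_smul] at h2
      have h3 : minkP n * waveOpP n (waveOpP n Q)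
          = -((γ + (4*(e:ℝ) + 2*(n+1))) • waveOpP n Q) :=
        (eq_sub_of_add_eq h2).trans (by module)
      have h4 : waveOpP n Q = 0 :=
        IH e (by omega) _ hWQ _ (by positivity) h3
      rw [h4, mul_zero] at heq
      have h0 : γ • Q = 0 := by rw [← neg_eq_zero, ← heq]
      exact real_smul_eq_zero (ne_of_gt hγ) h0

lemma wave_surj : ∀ d : ℕ, ∀ γ : ℝ, 0 ≤ γ → ∀ R : MvPolynomial (Fin (n+1)) ℝ,
    R.IsHomogeneous d →
    ∃ Q : MvPolynomial (Fin (n+1)) ℝ, Q.IsHomogeneous d ∧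
      waveOpP n (minkP n * Q) + γ • Q = R := by
  intro d
  induction d using Nat.strong_induction_on with
  | _ d IH =>
    intro γ hγ R hR
    have hcpos : (0:ℝ) < 4*(d:ℝ) + 2*(n+1) := by positivity
    set c : ℝ := 4*(d:ℝ) + 2*(n+1) with hc
    have hne : c + γ ≠ 0 := by positivity
    by_cases hd : d ≤ 1
    · refine ⟨(c+γ)⁻¹ • R, smul_homog hR _, ?_⟩
      rw [keyId' (smul_homog hR _), wave_low (smul_homog hR ((c+γ)⁻¹)) hd, mul_zero, zero_add,
        smul_smul, smul_smul, ← add_smul, ← add_mul, mul_inv_cancel₀ hne, one_smul]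
    · obtain ⟨e, rfl⟩ : ∃ e, d = e + 2 := ⟨d - 2, by omega⟩
      have hWR : (waveOpP n R).IsHomogeneous e := wave_homog hR
      obtain ⟨S, hS, hSeq⟩ := IH e (by omega) (c+γ) (by positivity) _ hWR
      have hqS : (minkP n * S).IsHomogeneous (e+2) := by
        have h5 := mink_homog.mul hS
        rwa [Nat.add_comm 2 e] at h5
      have hQhom : ((c+γ)⁻¹ • (R - minkP n * S)).IsHomogeneous (e+2) :=
        smul_homog (hR.sub hqS) _
      refine ⟨_, hQhom, ?_⟩
      rw [keyId' hQhom]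
      have hWQ : waveOpP n ((c+γ)⁻¹ • (R - minkP n * S)) = S := by
        rw [wave_smul, wave_sub,
          show waveOpP n R - waveOpP n (minkP n * S) = (c+γ) • S from
            (eq_sub_of_add_eq' hSeq).symm,
          smul_smul, inv_mul_cancel₀ hne, one_smul]
      rw [hWQ, ← hc]
      have hsc : c * (c+γ)⁻¹ + γ * (c+γ)⁻¹ = 1 := by
        field_simp
      match_scalars <;> field_simp <;> ring

lemma decomp_spec_unique (p : ℕ) (P : MvPolynomial (Fin (n+1)) ℝ)
    (Y Z : MvPolynomial (Fin (n+1)) ℝ × MvPolynomial (Fin (n+1)) ℝ)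
    (hY : Y.1.IsHomogeneous p ∧ waveOpP n Y.1 = 0 ∧ Y.2.IsHomogeneous (p - 2) ∧
      P = Y.1 + minkP n * Y.2)
    (hZ : Z.1.IsHomogeneous p ∧ waveOpP n Z.1 = 0 ∧ Z.2.IsHomogeneous (p - 2) ∧
      P = Z.1 + minkP n * Z.2) : Y = Z := by
  obtain ⟨hY1, hY2, hY3, hY4⟩ := hY
  obtain ⟨hZ1, hZ2, hZ3, hZ4⟩ := hZ
  have heq : Y.1 + minkP n * Y.2 = Z.1 + minkP n * Z.2 := hY4.symm.trans hZ4
  have hD : (Y.2 - Z.2).IsHomogeneous (p - 2) := hY3.sub hZ3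
  have hqD : minkP n * (Y.2 - Z.2) = Z.1 - Y.1 := by
    rw [mul_sub]
    linear_combination heq
  have hw0 : waveOpP n (minkP n * (Y.2 - Z.2)) = 0 := by
    rw [hqD, wave_sub, hY2, hZ2, sub_zero]
  have hk := keyId' hD
  rw [hw0] at hk
  have hmain : minkP n * waveOpP n (Y.2 - Z.2)
      = -((4*((p-2 : ℕ):ℝ) + 2*(n+1)) • (Y.2 - Z.2)) :=
    eq_neg_of_add_eq_zero_left hk.symm
  have hD0 : Y.2 - Z.2 = 0 := wave_inj (p-2) _ hD _ (by positivity) hmain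
  have h2 : Y.2 = Z.2 := sub_eq_zero.mp hD0
  have h1 : Y.1 = Z.1 := by
    rw [h2] at heq
    exact add_right_cancel heq
  exact Prod.ext h1 h2

theorem homogeneous_poly_decomposition (n p : ℕ) (P : MvPolynomial (Fin (n+1)) ℝ)
    (hP : P.IsHomogeneous p) :
    ∃! HQ : MvPolynomial (Fin (n+1)) ℝ × MvPolynomial (Fin (n+1)) ℝ,
      HQ.1.IsHomogeneous p ∧ waveOpP n HQ.1 = 0 ∧ HQ.2.IsHomogeneous (p - 2) ∧
      P = HQ.1 + minkP n * HQ.2 := by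
  by_cases hp : p ≤ 1
  · refine ⟨(P, 0), ⟨hP, wave_low hP hp, isHomogeneous_zero _ _ _, by simp⟩,
      fun Z hZ => decomp_spec_unique p P Z (P, 0)
        hZ ⟨hP, wave_low hP hp, isHomogeneous_zero _ _ _, by simp⟩⟩
  · obtain ⟨e, rfl⟩ : ∃ e, p = e + 2 := ⟨p - 2, by omega⟩
    obtain ⟨Q, hQ, hQeq⟩ := wave_surj e 0 le_rfl (waveOpP n P) (wave_homog hP)
    rw [zero_smul, add_zero] at hQeq
    have hqQ : (minkP n * Q).IsHomogeneous (e+2) := by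
      have h5 := mink_homog.mul hQ
      rwa [Nat.add_comm 2 e] at h5
    have he : e + 2 - 2 = e := by omega
    refine ⟨(P - minkP n * Q, Q), ⟨hP.sub hqQ, ?_, by rwa [he], by ring⟩, ?_⟩
    · rw [wave_sub, hQeq, sub_self]
    · intro Z hZ
      exact decomp_spec_unique _ P Z (P - minkP n * Q, Q)
        hZ ⟨hP.sub hqQ, by rw [wave_sub, hQeq, sub_self], by rwa [he], by ring⟩
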